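/- Suppose (u,v) is a pair of words over {0,1} with (u choose v0) = 0 and (u choose v1) = 0 (i.e., v0 and v1 do not occur as subsequences of u). Then for any words w, z of the same length, (uw choose vz) = (u choose v)·(w choose z). -/

import Mathlib

/-- The binomial coefficient of words: the number of occurrences of the second
word as a scattered subsequence of the first. -/
def wb {A : Type*} [DecidableEq A] : List A → List A → ℕ
  | _, [] => 1
  | [], _ :: _ => 0
  | a :: u, b :: v => wb u (b :: v) + (if a = b then wb u v else 0)

lemma wb_len {A : Type*} [DecidableEq A] : ∀ (w t : List A), w.length < t.length → wb w t = 0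
  | _, [], h => by simp at h
  | [], _ :: _, _ => rfl
  | a :: w, c :: t, h => by
    have h1 : w.length < (c :: t).length := by simp at h ⊢; omega
    have h2 : w.length < t.length := by simp at h; omega
    simp [wb, wb_len w (c :: t) h1, wb_len w t h2]

theorem stmt_8 (u v : List Bool) (h0 : wb u (v ++ [false]) = 0)
    (h1 : wb u (v ++ [true]) = 0) (w z : List Bool) (hlen : w.length = z.length) :
    wb (u ++ w) (v ++ z) = wb u v * wb w z := by
  induction u generalizing v with
  | nil =>
    cases v with
    | nil => simp [wb]
    | cons b v' =>
      have hz : wb w ((b :: v') ++ z) = 0 := wb_len _ _ (by simp [hlen])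
      simp only [List.cons_append] at hz
      simp [wb, hz]
  | cons a u ih =>
    cases v with
    | nil =>
      exfalso
      cases a <;> simp [wb] at h0 h1
    | cons b v' =>
      rw [List.cons_append] at h0 h1
      simp only [wb] at h0 h1
      obtain ⟨h0a, h0b⟩ := Nat.add_eq_zero.mp h0
      obtain ⟨h1a, h1b⟩ := Nat.add_eq_zero.mp h1
      have ihv : wb (u ++ w) ((b :: v') ++ z) = wb u (b :: v') * wb w z := by
        apply ih <;> rw [List.cons_append] <;> assumption
      simp only [List.cons_append, List.append_assoc] at ihv ⊢
      simp only [wb]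
      by_cases hab : a = b
      · have h0c : wb u (v' ++ [false]) = 0 := by simpa [hab] using h0b
        have h1c : wb u (v' ++ [true]) = 0 := by simpa [hab] using h1b
        have ihv' := ih v' h0c h1c
        simp [hab, ihv, ihv', Nat.add_mul]
      · simp [hab, ihv]
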